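/- Fix a function H : Σ → Δ (a 'hash'). Define the Merkle root of a nonempty list of values recursively: the root of a single leaf x is H(leaf(x)), and the root of a balanced binary tree over a list is H(node(h_left, h_right)) where h_left, h_right are the roots of the left and right halves. If two distinct lists of equal length have the same Merkle root, then there exist distinct inputs a ≠ b with H(a) = H(b), i.e., a collision for H. -/

import Mathlib

/-- The Merkle root of a nonempty list: a single leaf `x` hashes to
`H (leaf x)`; a longer list is split into halves and the root is
`H (node (root left, root right))`. Here `Sum.inl` plays the role of the
`leaf` injection and `Sum.inr` the role of the `node` injection (they are
injective with disjoint ranges). -/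
def merkleRoot {V Δ : Type*} [Inhabited Δ] (H : V ⊕ (Δ × Δ) → Δ) : List V → Δ
  | [] => default
  | [x] => H (Sum.inl x)
  | x :: y :: l =>
      H (Sum.inr
        (merkleRoot H ((x :: y :: l).take ((l.length + 2) / 2)),
         merkleRoot H ((x :: y :: l).drop ((l.length + 2) / 2))))
  termination_by l => l.length
  decreasing_by
    all_goals (simp [List.length_take, List.length_drop] <;> omega)

theorem stmt13_aux {V Δ : Type*} [Inhabited Δ] (H : V ⊕ (Δ × Δ) → Δ) :
    ∀ n (l₁ l₂ : List V), l₁.length = n → l₂.length = n → l₁ ≠ l₂ →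
      merkleRoot H l₁ = merkleRoot H l₂ →
      ∃ a b : V ⊕ (Δ × Δ), a ≠ b ∧ H a = H b := by
  intro n
  induction n using Nat.strong_induction_on with
  | _ n ih =>
    intro l₁ l₂ h1 h2 hne hroot
    match n, l₁, l₂ with
    | 0, [], [] => exact absurd rfl hne
    | 1, [x], [y] =>
      rw [merkleRoot, merkleRoot] at hroot
      refine ⟨Sum.inl x, Sum.inl y, ?_, hroot⟩
      simp only [ne_eq, Sum.inl.injEq]
      intro h; exact hne (by rw [h])
    | (m+2), (x :: y :: l), (x' :: y' :: l') =>
      have hl : l.length = m := by simpa using h1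
      have hl' : l'.length = m := by simpa using h2
      set k := (m + 2) / 2 with hk
      rw [merkleRoot, merkleRoot] at hroot
      rw [hl] at hroot; rw [hl'] at hroot
      by_cases hp :
          ((merkleRoot H ((x :: y :: l).take k),
            merkleRoot H ((x :: y :: l).drop k)) :
            Δ × Δ) =
          (merkleRoot H ((x' :: y' :: l').take k),
           merkleRoot H ((x' :: y' :: l').drop k))
      · -- halves have equal roots; lists differ in one half
        have hpt : merkleRoot H ((x :: y :: l).take k)
            = merkleRoot H ((x' :: y' :: l').take k) := congrArg Prod.fst hp
        have hpd : merkleRoot H ((x :: y :: l).drop k)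
            = merkleRoot H ((x' :: y' :: l').drop k) := congrArg Prod.snd hp
        have hlen1 : (x :: y :: l).length = m + 2 := by simpa using h1
        have hlen2 : (x' :: y' :: l').length = m + 2 := by simpa using h2
        have hkle : k ≤ m + 2 := by omega
        have hk1 : 0 < k := by omega
        have hk2 : k < m + 2 := by omega
        by_cases ht : (x :: y :: l).take k = (x' :: y' :: l').take k
        · have hd : (x :: y :: l).drop k ≠ (x' :: y' :: l').drop k := by
            intro hdd
            apply hne
            have := congrArg₂ List.append ht hdd
            simpa using this
          exact ih (m + 2 - k) (by omega) _ _
            (by simp [List.length_drop, hlen1])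
            (by simp [List.length_drop, hlen2]) hd hpd
        · exact ih k (by omega) _ _
            (by simp [List.length_take, hlen1]; omega)
            (by simp [List.length_take, hlen2]; omega) ht hpt
      · exact ⟨_, _, fun h => hp (Sum.inr.inj h), hroot⟩

/-- if two distinct lists of equal length have the same Merkle
root, then `H` has a collision. -/
theorem stmt13 {V Δ : Type*} [Inhabited Δ] (H : V ⊕ (Δ × Δ) → Δ)
    (l₁ l₂ : List V) (hlen : l₁.length = l₂.length) (hne : l₁ ≠ l₂)
    (hroot : merkleRoot H l₁ = merkleRoot H l₂) :
    ∃ a b : V ⊕ (Δ × Δ), a ≠ b ∧ H a = H b := by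
  exact stmt13_aux H l₂.length l₁ l₂ hlen rfl hne hroot
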